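/- Let G be a simple graph on vertex set {1,…,n}, and let K be an n×n real matrix such that K_{uv} = 0 whenever u ≠ v and {u,v} is not an edge of G. Let s₀ = 0 < s₁ = 1 < ⋯ < s_{J+1} be natural numbers and define Ψⱼ = K^{sⱼ} − K^{s_{j+1}} for 0 ≤ j ≤ J. Let S₁, S₂ be nonempty disjoint subsets of vertices such that every u ∈ S₁ and v ∈ S₂ satisfy: either u and v are not connected in G, or the graph distance d(u,v) ≥ 2 s_{J+1} + 1. Set x₁ = δ_{S₁} + δ_{S₂} and x₂ = δ_{S₁} − δ_{S₂}, where δ_S is the indicator vector of S. Then x₁ ≠ x₂ and x₁ ≠ −x₂, yet |Ψⱼ x₁| = |Ψⱼ x₂| entrywise for every 0 ≤ j ≤ J. -/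
import Mathlib

open Matrix

private lemma walk_of_pow_ne_zero {n : ℕ} (G : SimpleGraph (Fin n))
    (K : Matrix (Fin n) (Fin n) ℝ)
    (hK : ∀ u v : Fin n, u ≠ v → ¬ G.Adj u v → K u v = 0) :
    ∀ (m : ℕ) (u v : Fin n), (K ^ m) u v ≠ 0 → ∃ p : G.Walk u v, p.length ≤ m := by
  intro m
  induction m with
  | zero =>
    intro u v h
    rw [pow_zero] at h
    by_cases huv : u = v
    · subst huv; exact ⟨SimpleGraph.Walk.nil, le_refl _⟩
    · exact absurd (Matrix.one_apply_ne huv) h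
  | succ m ih =>
    intro u v h
    rw [pow_succ, Matrix.mul_apply] at h
    obtain ⟨w, -, hw⟩ := Finset.exists_ne_zero_of_sum_ne_zero h
    obtain ⟨h1, h2⟩ := mul_ne_zero_iff.mp hw
    obtain ⟨p, hp⟩ := ih u w h1
    by_cases hwv : w = v
    · subst hwv; exact ⟨p, hp.trans (Nat.le_succ m)⟩
    · have hadj : G.Adj w v := by
        by_contra hna
        exact h2 (hK w v hwv hna)
      exact ⟨p.concat hadj, by rw [SimpleGraph.Walk.length_concat]; omega⟩

private lemma walk_of_mulVec_ind {n : ℕ} (G : SimpleGraph (Fin n))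
    (K : Matrix (Fin n) (Fin n) ℝ)
    (hK : ∀ u v : Fin n, u ≠ v → ¬ G.Adj u v → K u v = 0)
    (m : ℕ) (S : Finset (Fin n)) (i : Fin n)
    (h : ((K ^ m) *ᵥ fun v => if v ∈ S then (1 : ℝ) else 0) i ≠ 0) :
    ∃ u ∈ S, ∃ p : G.Walk i u, p.length ≤ m := by
  rw [Matrix.mulVec, dotProduct] at h
  obtain ⟨u, -, hu⟩ := Finset.exists_ne_zero_of_sum_ne_zero h
  obtain ⟨h1, h2⟩ := mul_ne_zero_iff.mp hu
  have huS : u ∈ S := by by_contra hns; simp [hns] at h2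
  obtain ⟨p, hp⟩ := walk_of_pow_ne_zero G K hK m i u h1
  exact ⟨u, huS, p, hp⟩

theorem scattering_not_injective_large_diameter {n J : ℕ}
    (G : SimpleGraph (Fin n)) (K : Matrix (Fin n) (Fin n) ℝ)
    (hK : ∀ u v : Fin n, u ≠ v → ¬ G.Adj u v → K u v = 0)
    (s : Fin (J + 2) → ℕ) (hs0 : s 0 = 0) (hs1 : s 1 = 1) (hs : StrictMono s)
    (S₁ S₂ : Finset (Fin n)) (hS₁ : S₁.Nonempty) (hS₂ : S₂.Nonempty)
    (hdisj : Disjoint S₁ S₂)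
    (hfar : ∀ u ∈ S₁, ∀ v ∈ S₂,
      ¬ G.Reachable u v ∨ 2 * s (Fin.last (J + 1)) + 1 ≤ G.dist u v)
    (x₁ x₂ : Fin n → ℝ)
    (hx₁ : x₁ = (fun v => if v ∈ S₁ then (1 : ℝ) else 0) +
        (fun v => if v ∈ S₂ then (1 : ℝ) else 0))
    (hx₂ : x₂ = (fun v => if v ∈ S₁ then (1 : ℝ) else 0) -
        (fun v => if v ∈ S₂ then (1 : ℝ) else 0)) :
    x₁ ≠ x₂ ∧ x₁ ≠ -x₂ ∧
    ∀ j : Fin (J + 1), ∀ i,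
      |((K ^ (s j.castSucc) - K ^ (s j.succ)) *ᵥ x₁) i| =
        |((K ^ (s j.castSucc) - K ^ (s j.succ)) *ᵥ x₂) i| := by
  obtain ⟨u₀, hu₀⟩ := hS₁
  obtain ⟨v₀, hv₀⟩ := hS₂
  have hv₀1 : v₀ ∉ S₁ := fun h => (Finset.disjoint_left.mp hdisj h) hv₀
  have hu₀2 : u₀ ∉ S₂ := fun h => (Finset.disjoint_left.mp hdisj hu₀) h
  set δ₁ : Fin n → ℝ := fun v => if v ∈ S₁ then (1 : ℝ) else 0 with hδ₁
  set δ₂ : Fin n → ℝ := fun v => if v ∈ S₂ then (1 : ℝ) else 0 with hδ₂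
  refine ⟨?_, ?_, ?_⟩
  · intro h
    have := congrFun h v₀
    simp [hx₁, hx₂, hδ₁, hδ₂, hv₀, hv₀1] at this
    norm_num at this
  · intro h
    have := congrFun h u₀
    simp [hx₁, hx₂, hδ₁, hδ₂, hu₀, hu₀2] at this
    norm_num at this
  · intro j i
    set L := s (Fin.last (J + 1)) with hL
    set Ψ := K ^ (s j.castSucc) - K ^ (s j.succ) with hΨ
    have key : ∀ (m : ℕ), m ≤ L → ∀ S : Finset (Fin n),
        (((K ^ m) *ᵥ fun v => if v ∈ S then (1 : ℝ) else 0) i ≠ 0) →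
        ∃ u ∈ S, ∃ p : G.Walk i u, p.length ≤ L := by
      intro m hm S h
      obtain ⟨u, hu, p, hp⟩ := walk_of_mulVec_ind G K hK m S i h
      exact ⟨u, hu, p, hp.trans hm⟩
    have hm₁ : s j.castSucc ≤ L := hs.monotone (Fin.le_last _)
    have hm₂ : s j.succ ≤ L := hs.monotone (Fin.le_last _)
    have keyΨ : ∀ S : Finset (Fin n),
        ((Ψ *ᵥ fun v => if v ∈ S then (1 : ℝ) else 0) i ≠ 0) →
        ∃ u ∈ S, ∃ p : G.Walk i u, p.length ≤ L := by
      intro S h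
      rw [hΨ, Matrix.sub_mulVec] at h
      simp only [Pi.sub_apply] at h
      by_cases h1 : ((K ^ (s j.castSucc)) *ᵥ fun v => if v ∈ S then (1:ℝ) else 0) i = 0
      · have h2 : ((K ^ (s j.succ)) *ᵥ fun v => if v ∈ S then (1:ℝ) else 0) i ≠ 0 := by
          intro h2; rw [h1, h2] at h; simp at h
        exact key _ hm₂ S h2
      · exact key _ hm₁ S h1
    have hab : (Ψ *ᵥ δ₁) i = 0 ∨ (Ψ *ᵥ δ₂) i = 0 := by
      by_contra hc
      push_neg at hc
      obtain ⟨u, hu, p, hp⟩ := keyΨ S₁ hc.1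
      obtain ⟨v, hv, q, hq⟩ := keyΨ S₂ hc.2
      have hreach : G.Reachable u v := ⟨p.reverse.append q⟩
      have hdist : G.dist u v ≤ 2 * L := by
        calc G.dist u v ≤ (p.reverse.append q).length := G.dist_le _
        _ = p.length + q.length := by
            rw [SimpleGraph.Walk.length_append, SimpleGraph.Walk.length_reverse]
        _ ≤ 2 * L := by omega
      rcases hfar u hu v hv with h | h
      · exact h hreach
      · omega
    have e₁ : (Ψ *ᵥ x₁) i = (Ψ *ᵥ δ₁) i + (Ψ *ᵥ δ₂) i := by
      rw [hx₁, Matrix.mulVec_add]; rfl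
    have e₂ : (Ψ *ᵥ x₂) i = (Ψ *ᵥ δ₁) i - (Ψ *ᵥ δ₂) i := by
      rw [hx₂, Matrix.mulVec_sub]; rfl
    rw [e₁, e₂]
    rcases hab with h | h <;> rw [h] <;> simp
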